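/- Let M = (X, d) be a finite metric space and K_M the complete graph on X with edge weights w(xy) = d(x,y). If T is a fully labeled tree representation of M, then T is a spanning tree of K_M, and T is the unique minimum spanning tree of K_M: every spanning tree T' of K_M with edge set different from that of T has strictly greater total edge weight. -/

import Mathlib

/-- The total weight of a walk in a graph, with respect to an edge-weight
function `w` on pairs of vertices. -/
def SimpleGraph.Walk.weight {V : Type*} {G : SimpleGraph V} (w : V → V → ℝ)
    {u v : V} (p : G.Walk u v) : ℝ :=
  (p.darts.map fun d => w d.toProd.1 d.toProd.2).sum

/-- The total length of a graph on the point set of a metric space, where each edge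
`xy` is weighted by `dist x y` (the edge weights of the complete graph `K_M`). -/
noncomputable def totalDist {X : Type*} [MetricSpace X] [Fintype X]
    (G : SimpleGraph X) : ℝ :=
  letI := Classical.decEq X
  letI : DecidableRel G.Adj := fun _ _ => Classical.dec _
  ∑ e ∈ G.edgeFinset, Sym2.lift ⟨fun a b => dist a b, fun a b => dist_comm a b⟩ e

lemma myListSumToFinset {α : Type*} [DecidableEq α] (f : α → ℝ) :
    ∀ {l : List α}, l.Nodup → (l.map f).sum = ∑ x ∈ l.toFinset, f x := by
  intro l
  induction l with
  | nil => simp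
  | cons a l ih =>
    intro h
    rw [List.nodup_cons] at h
    rw [List.map_cons, List.sum_cons, List.toFinset_cons,
      Finset.sum_insert (by simpa using h.1), ih h.2]

lemma myCrossing {V : Type*} {G : SimpleGraph V} (P : V → Prop) :
    ∀ {a b : V} (_ : G.Walk a b), P a → ¬ P b → ∃ x y, G.Adj x y ∧ P x ∧ ¬ P y := by
  intro a b q
  induction q with
  | nil => intro h h'; exact absurd h h'
  | @cons u c b h q ih =>
    intro ha hb
    by_cases hc : P c
    · exact ih hc hb
    · exact ⟨u, c, h, ha, hc⟩

theorem fully_labeled_tree_rep_is_unique_mst {X : Type} [MetricSpace X] [Fintype X]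
    (G : SimpleGraph X) (hT : G.IsTree) (w : X → X → ℝ)
    (hpos : ∀ u v : X, G.Adj u v → 0 < w u v) (hsymm : ∀ u v : X, w u v = w v u)
    (hmetric : ∀ x y : X, ∀ p : G.Walk x y, p.IsPath → p.weight w = dist x y) :
    G ≤ ⊤ ∧ (∀ u v : X, G.Adj u v → w u v = dist u v) ∧
      ∀ G' : SimpleGraph X, G'.IsTree → G'.edgeSet ≠ G.edgeSet →
        totalDist G < totalDist G' := by
  classical
  -- Part 2 : adjacent weights equal distances
  have hwd : ∀ u v : X, G.Adj u v → w u v = dist u v := by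
    intro u v huv
    have hp : (SimpleGraph.Walk.cons huv SimpleGraph.Walk.nil).IsPath :=
      (SimpleGraph.Path.singleton huv).2
    have := hmetric u v _ hp
    simpa [SimpleGraph.Walk.weight] using this
  refine ⟨le_top, hwd, ?_⟩
  -- the distance function on `Sym2`
  set D : Sym2 X → ℝ :=
    Sym2.lift ⟨fun a b => dist a b, fun a b => dist_comm a b⟩ with hD
  -- canonical paths in the tree `G`
  have hup := hT.existsUnique_path
  set pth : ∀ x y : X, G.Walk x y := fun x y => (hup x y).exists.choose with hpth
  have hpath : ∀ x y, (pth x y).IsPath := fun x y => (hup x y).exists.choose_spec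
  have huniq : ∀ x y (q : G.Walk x y), q.IsPath → q = pth x y :=
    fun x y q hq => (hup x y).unique hq (hpath x y)
  set F : X → X → Finset (Sym2 X) := fun x y => (pth x y).edges.toFinset with hF
  have hFsymm : ∀ x y, F x y = F y x := by
    intro x y
    have h1 : (pth x y).reverse = pth y x :=
      huniq y x _ ((hpath x y).reverse)
    rw [hF]
    simp only [← h1, SimpleGraph.Walk.edges_reverse, List.toFinset_reverse]
  have hdistF : ∀ x y, dist x y = ∑ f ∈ F x y, D f := by
    intro x y
    have hm := hmetric x y (pth x y) (hpath x y)
    rw [SimpleGraph.Walk.weight] at hm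
    have hmap : ((pth x y).darts.map fun d => w d.toProd.1 d.toProd.2)
        = (pth x y).edges.map D := by
      rw [SimpleGraph.Walk.edges, List.map_map]
      refine List.map_congr_left ?_
      intro d _
      simp only [Function.comp_apply, SimpleGraph.Dart.edge, hD, Sym2.lift_mk]
      exact hwd _ _ d.adj
    rw [hmap, myListSumToFinset D
      ((hpath x y).isTrail.edges_nodup)] at hm
    exact hm.symm
  have hFsub : ∀ x y, F x y ⊆ G.edgeFinset := by
    intro x y f hf
    rw [SimpleGraph.mem_edgeFinset]
    exact (pth x y).edges_subset_edgeSet (List.mem_toFinset.mp hf)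
  have hFcard : ∀ x y, (F x y).card = (pth x y).length := by
    intro x y
    rw [hF]
    rw [List.toFinset_card_of_nodup ((hpath x y).isTrail.edges_nodup)]
    exact (pth x y).length_edges
  have hDpos : ∀ f ∈ G.edgeFinset, 0 < D f := by
    intro f hf
    induction f using Sym2.ind with
    | _ a b =>
      rw [SimpleGraph.mem_edgeFinset, SimpleGraph.mem_edgeSet] at hf
      simpa [hD] using dist_pos.mpr hf.ne
  -- the lift of F to Sym2
  set Fl : Sym2 X → Finset (Sym2 X) := Sym2.lift ⟨F, hFsymm⟩ with hFl
  have hDe : ∀ e : Sym2 X, D e = ∑ f ∈ Fl e, D f := by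
    intro e
    induction e using Sym2.ind with
    | _ x y => simpa [hD, hFl] using hdistF x y
  have hFlsub : ∀ e, Fl e ⊆ G.edgeFinset := by
    intro e
    induction e using Sym2.ind with
    | _ x y => simpa [hFl] using hFsub x y
  have htd : ∀ (H : SimpleGraph X) [Fintype H.edgeSet],
      totalDist H = ∑ e ∈ H.edgeFinset, D e := by
    intro H _
    rw [totalDist]
    refine Finset.sum_congr ?_ (fun _ _ => rfl)
    ext e
    simp [SimpleGraph.mem_edgeFinset]
  -- now the main part
  intro G' hT' hne
  set E : Finset (Sym2 X) := G.edgeFinset with hE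
  set E' : Finset (Sym2 X) := G'.edgeFinset with hE'
  have hFlcard1 : ∀ e ∈ E', 1 ≤ (Fl e).card := by
    intro e he
    induction e using Sym2.ind with
    | _ x y =>
      rw [hE', SimpleGraph.mem_edgeFinset, SimpleGraph.mem_edgeSet] at he
      have hxy : x ≠ y := he.ne
      have : (Fl s(x, y)).card = (pth x y).length := by
        simpa [hFl] using hFcard x y
      rw [this]
      rcases Nat.eq_zero_or_pos (pth x y).length with h0 | h1
      · exact absurd (SimpleGraph.Walk.eq_of_length_eq_zero h0) hxy
      · exact h1
  have hFlcard2 : ∀ e ∈ E', e ∉ E → 2 ≤ (Fl e).card := by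
    intro e he heE
    induction e using Sym2.ind with
    | _ x y =>
      rw [hE', SimpleGraph.mem_edgeFinset, SimpleGraph.mem_edgeSet] at he
      rw [hE, SimpleGraph.mem_edgeFinset, SimpleGraph.mem_edgeSet] at heE
      have hxy : x ≠ y := he.ne
      have hcard : (Fl s(x, y)).card = (pth x y).length := by
        simpa [hFl] using hFcard x y
      rw [hcard]
      rcases Nat.lt_or_ge (pth x y).length 2 with h | h
      · interval_cases h' : (pth x y).length
        · exact absurd (SimpleGraph.Walk.eq_of_length_eq_zero h') hxy
        · exact absurd (SimpleGraph.Walk.adj_of_length_eq_one h') heE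
      · exact h
  -- the counting function
  set c : Sym2 X → ℕ := fun f => (E'.filter fun e => f ∈ Fl e).card with hc
  -- every edge of G is used by some edge of G'
  have hc1 : ∀ f ∈ E, ∃ e ∈ E', f ∈ Fl e := by
    intro f hf
    induction f using Sym2.ind with
    | _ a b =>
      rw [hE, SimpleGraph.mem_edgeFinset] at hf
      have hbridge : G.IsBridge s(a, b) :=
        SimpleGraph.isAcyclic_iff_forall_edge_isBridge.mp hT.IsAcyclic hf
      have hPb : ¬ (G \ SimpleGraph.fromEdgeSet {s(a, b)}).Reachable a b :=
        SimpleGraph.isBridge_iff.mp hbridge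
      set P : X → Prop := fun v => (G \ SimpleGraph.fromEdgeSet {s(a, b)}).Reachable a v
        with hP
      have hPa : P a := SimpleGraph.Reachable.refl a
      obtain ⟨q⟩ := hT'.isConnected.preconnected a b
      obtain ⟨x, y, hxy, hPx, hPy⟩ := myCrossing P q hPa hPb
      refine ⟨s(x, y), by rwa [hE', SimpleGraph.mem_edgeFinset, SimpleGraph.mem_edgeSet], ?_⟩
      have hmem : s(a, b) ∈ (pth x y).edges := by
        by_contra hnot
        have hw : (G.deleteEdges {s(a, b)}).Walk x y :=
          (pth x y).toDeleteEdges {s(a, b)}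
            (fun e' he' => by
              intro hcontra
              rw [Set.mem_singleton_iff] at hcontra
              exact hnot (hcontra ▸ he'))
        have : P y := hPx.trans ⟨hw⟩
        exact hPy this
      simpa [hFl, hF] using hmem
  -- total distance of G' as a weighted sum over edges of G
  have hA : totalDist G' = ∑ f ∈ E, (c f : ℝ) * D f := by
    rw [htd G', ← hE']
    have step1 : ∀ e ∈ E', D e = ∑ f ∈ E, (if f ∈ Fl e then D f else 0) := by
      intro e he
      rw [hDe e]
      rw [← Finset.sum_filter]
      congr 1
      ext f
      simp only [Finset.mem_filter]
      exact ⟨fun h => ⟨hFlsub e h, h⟩, fun h => h.2⟩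
    rw [Finset.sum_congr rfl step1, Finset.sum_comm]
    refine Finset.sum_congr rfl ?_
    intro f _
    rw [← Finset.sum_filter, Finset.sum_const, hc, nsmul_eq_mul]
  -- the double count
  have hB : ∑ f ∈ E, c f = ∑ e ∈ E', (Fl e).card := by
    simp only [hc, Finset.card_filter]
    rw [Finset.sum_comm]
    refine Finset.sum_congr rfl ?_
    intro e he
    rw [← Finset.card_filter]
    congr 1
    ext f
    simp only [Finset.mem_filter]
    exact ⟨fun h => h.2, fun h => ⟨hFlsub e h, h⟩⟩
  -- there is an edge of G' not in G
  have hcard : E'.card = E.card := by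
    have h1 := hT.card_edgeFinset
    have h2 := hT'.card_edgeFinset
    have g1 : E.card + 1 = Fintype.card X := by
      rw [hE]; convert h1 using 4
    have g2 : E'.card + 1 = Fintype.card X := by
      rw [hE']; convert h2 using 4
    omega
  have hnsub : ¬ E' ⊆ E := by
    intro hsub
    apply hne
    have heq : E' = E := Finset.eq_of_subset_of_card_le hsub hcard.ge
    ext e
    rw [← SimpleGraph.mem_edgeFinset, ← SimpleGraph.mem_edgeFinset, ← hE, ← hE', heq]
  obtain ⟨e0, he0', he0⟩ := Finset.not_subset.mp hnsub
  -- some edge of G is used at least twice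
  have hf0 : ∃ f0 ∈ E, 2 ≤ c f0 := by
    by_contra hcon
    push_neg at hcon
    have hle : ∑ f ∈ E, c f ≤ E.card := by
      calc ∑ f ∈ E, c f ≤ ∑ _f ∈ E, 1 := Finset.sum_le_sum (fun f hf => by
              have := hcon f hf; omega)
        _ = E.card := by simp
    have hgt : E.card < ∑ f ∈ E, c f := by
      rw [hB, ← hcard]
      calc E'.card = ∑ _e ∈ E', 1 := by simp
        _ < ∑ e ∈ E', (Fl e).card := by
            refine Finset.sum_lt_sum (fun e he => hFlcard1 e he) ⟨e0, he0', ?_⟩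
            have := hFlcard2 e0 he0' he0; omega
    omega
  obtain ⟨f0, hf0E, hf02⟩ := hf0
  -- final strict inequality
  rw [htd G, ← hE, hA]
  refine Finset.sum_lt_sum ?_ ⟨f0, hf0E, ?_⟩
  · intro f hf
    have hpos' := hDpos f hf
    have h1 : (1 : ℝ) ≤ (c f : ℝ) := by
      obtain ⟨e, he, hfe⟩ := hc1 f hf
      have : 0 < c f := Finset.card_pos.mpr ⟨e, Finset.mem_filter.mpr ⟨he, hfe⟩⟩
      exact_mod_cast this
    nlinarith
  · have hpos' := hDpos f0 hf0E
    have h2 : (2 : ℝ) ≤ (c f0 : ℝ) := by exact_mod_cast hf02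
    nlinarith
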